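/- Let $\Theta \subset \mathbb{R}$ be compact, $\eps > 0$, and let $\mathcal{D}_\eps \subset \Theta^j$ be the set of $\eps$-separated $j$-tuples. For $(\theta_1, \dots, \theta_j) \in \mathcal{D}_\eps$ and a coefficient vector $\Lambda \in \mathbb{R}^d$ (indexed by $(i,\ell)$, $1 \le \ell \le d_i$, $\sum d_i = d$), the map $\Lambda \mapsto A(\theta_1,\dots,\theta_j)\Lambda$ satisfies $c_*(\eps) \|\Lambda\| \le \|A(\theta_1,\dots,\theta_j)\Lambda\| \le c^*(\eps)\|\Lambda\|$ for positive constants $c_*(\eps), c^*(\eps)$ independent of $(\theta_i)$ and $\Lambda$. -/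

import Mathlib

open Polynomial in
lemma stmt4_transpose_ker {j d : ℕ} {dv : Fin j → ℕ} (hsum : ∑ i, dv i = d)
    (e : (Σ i : Fin j, Fin (dv i)) ≃ Fin d) (θ : Fin j → ℝ)
    (hsep : Function.Injective θ) (c : Fin d → ℝ)
    (h : ∀ col : Fin d, ∑ k : Fin d,
        (if ((e.symm col).2 : ℕ) ≤ (k : ℕ)
          then θ (e.symm col).1 ^ ((k : ℕ) - ((e.symm col).2 : ℕ)) /
            (Nat.factorial ((k : ℕ) - ((e.symm col).2 : ℕ)) : ℝ)
          else 0) * c k = 0) :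
    c = 0 := by
  -- the polynomial q = ∑ (c k / k!) X^k
  set q : ℝ[X] := ∑ k : Fin d, C (c k / (Nat.factorial k : ℝ)) * X ^ (k : ℕ) with hq
  -- each θ i is a root of q of multiplicity ≥ dv i
  have hder : ∀ (i : Fin j) (ℓ : Fin (dv i)),
      (derivative^[(ℓ : ℕ)] q).eval (θ i) = 0 := by
    intro i ℓ
    have hcol := h (e ⟨i, ℓ⟩)
    rw [Equiv.symm_apply_apply] at hcol
    rw [hq, iterate_derivative_sum, eval_finset_sum]
    rw [← hcol]
    refine Finset.sum_congr rfl fun k _ => ?_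
    rw [iterate_derivative_C_mul, iterate_derivative_X_pow_eq_C_mul, eval_mul, eval_C,
      eval_mul, eval_C, eval_pow, eval_X]
    by_cases hk : (ℓ : ℕ) ≤ (k : ℕ)
    · rw [if_pos hk]
      have hfac : ((Nat.factorial ((k:ℕ) - (ℓ:ℕ))) : ℝ) * ((k:ℕ).descFactorial (ℓ:ℕ) : ℝ)
          = (Nat.factorial (k:ℕ) : ℝ) := by
        rw [← Nat.cast_mul, Nat.factorial_mul_descFactorial hk]
      have h2 : (Nat.factorial (k:ℕ) : ℝ) ≠ 0 := Nat.cast_ne_zero.2 (Nat.factorial_ne_zero _)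
      field_simp
      linear_combination (c k * θ i ^ ((k:ℕ) - (ℓ:ℕ))) * hfac
    · rw [if_neg hk, Nat.descFactorial_eq_zero_iff_lt.2 (lt_of_not_ge hk)]
      simp
  have hqz : q = 0 := by
    by_contra hq0
    have hdvd : ∀ i : Fin j, (X - C (θ i)) ^ (dv i) ∣ q := by
      intro i
      rcases Nat.eq_zero_or_pos (dv i) with h0 | hpos
      · rw [h0, pow_zero]; exact one_dvd _
      have hlt : dv i - 1 < q.rootMultiplicity (θ i) := by
        apply Polynomial.lt_rootMultiplicity_of_isRoot_iterate_derivative_of_mem_nonZeroDivisors hq0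
        · intro m hm
          exact hder i ⟨m, lt_of_le_of_lt hm (Nat.sub_lt hpos one_pos)⟩
        · exact mem_nonZeroDivisors_of_ne_zero
            (Nat.cast_ne_zero.2 (Nat.factorial_ne_zero _))
      have : dv i ≤ q.rootMultiplicity (θ i) := by omega
      exact dvd_trans (pow_dvd_pow _ this) (q.pow_rootMultiplicity_dvd (θ i))
    have hcop : ((Finset.univ : Finset (Fin j)) : Set (Fin j)).Pairwise
        (Function.onFun IsCoprime fun i => (X - C (θ i)) ^ (dv i)) := by
      intro a _ b _ hab
      exact ((Polynomial.pairwise_coprime_X_sub_C hsep hab).pow)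
    have hproddvd : (∏ i : Fin j, (X - C (θ i)) ^ (dv i)) ∣ q :=
      Finset.prod_dvd_of_coprime hcop fun i _ => hdvd i
    have hdeg : (∏ i : Fin j, (X - C (θ i)) ^ (dv i)).natDegree = d := by
      rw [Polynomial.natDegree_prod]
      · simp only [Polynomial.natDegree_pow, Polynomial.natDegree_X_sub_C, mul_one]
        exact hsum
      · intro i _
        exact pow_ne_zero _ (Polynomial.X_sub_C_ne_zero _)
    have hdq : q.natDegree < d := by
      rcases Nat.eq_zero_or_pos d with h0 | hd
      · exfalso; apply hq0
        haveI : IsEmpty (Fin d) := by rw [h0]; infer_instance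
        rw [hq, Finset.univ_eq_empty, Finset.sum_empty]
      have : q.natDegree ≤ d - 1 := by
        apply Polynomial.natDegree_sum_le_of_forall_le
        intro k _
        refine le_trans (Polynomial.natDegree_C_mul_le _ _) ?_
        rw [Polynomial.natDegree_X_pow]
        omega
      omega
    have := Polynomial.natDegree_le_of_dvd hproddvd hq0
    omega
  funext k
  have hcoeff : q.coeff (k : ℕ) = c k / (Nat.factorial k : ℝ) := by
    rw [hq, Polynomial.finset_sum_coeff]
    rw [Finset.sum_eq_single k]
    · simp
    · intro b _ hbk
      rw [Polynomial.coeff_C_mul, Polynomial.coeff_X_pow, if_neg, mul_zero]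
      exact fun hc => hbk (Fin.ext hc.symm)
    · simp
  rw [hqz] at hcoeff
  simp only [Polynomial.coeff_zero] at hcoeff
  have h2 : (Nat.factorial (k:ℕ) : ℝ) ≠ 0 := Nat.cast_ne_zero.2 (Nat.factorial_ne_zero _)
  have := div_eq_zero_iff.1 hcoeff.symm
  simp only [Pi.zero_apply]
  tauto

lemma stmt4_det_ne_zero {j d : ℕ} {dv : Fin j → ℕ} (hsum : ∑ i, dv i = d)
    (e : (Σ i : Fin j, Fin (dv i)) ≃ Fin d) (θ : Fin j → ℝ)
    (hsep : Function.Injective θ) :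
    (Matrix.of fun (k c : Fin d) =>
        if ((e.symm c).2 : ℕ) ≤ (k : ℕ)
        then θ (e.symm c).1 ^ ((k : ℕ) - ((e.symm c).2 : ℕ)) /
          (Nat.factorial ((k : ℕ) - ((e.symm c).2 : ℕ)) : ℝ)
        else 0).det ≠ 0 := by
  set M : Matrix (Fin d) (Fin d) ℝ := Matrix.of fun (k c : Fin d) =>
        if ((e.symm c).2 : ℕ) ≤ (k : ℕ)
        then θ (e.symm c).1 ^ ((k : ℕ) - ((e.symm c).2 : ℕ)) /
          (Nat.factorial ((k : ℕ) - ((e.symm c).2 : ℕ)) : ℝ)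
        else 0 with hM
  intro hdet
  have hdetT : M.transpose.det = 0 := by rw [Matrix.det_transpose]; exact hdet
  obtain ⟨v, hv0, hv⟩ := (Matrix.exists_mulVec_eq_zero_iff).2 hdetT
  apply hv0
  apply stmt4_transpose_ker hsum e θ hsep
  intro col
  have := congrFun hv col
  simp only [hM, Matrix.mulVec, dotProduct, Matrix.transpose_apply, Matrix.of_apply, Pi.zero_apply] at this
  exact this

/-- uniform two-sided bounds `c_*(ε)‖Λ‖ ≤ ‖A(θ)Λ‖ ≤ c^*(ε)‖Λ‖`
for the matrix `A(θ)` with columns `a_{i,ℓ}[k] = θ_i^{k-ℓ}/(k-ℓ)! · 1_{k ≥ ℓ}`,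
uniformly over ε-separated tuples `θ` in a compact `Θ`. -/
theorem stmt_4 (Θ : Set ℝ) (hΘ : IsCompact Θ) (j d : ℕ) (hj : 0 < j)
    (dv : Fin j → ℕ) (hdv : ∀ i, 0 < dv i) (hsum : ∑ i, dv i = d)
    (e : (Σ i : Fin j, Fin (dv i)) ≃ Fin d) (ε : ℝ) (hε : 0 < ε) :
    ∃ cmin cmax : ℝ, 0 < cmin ∧ 0 < cmax ∧
      ∀ θ : Fin j → ℝ, (∀ i, θ i ∈ Θ) → (∀ i i', i ≠ i' → ε ≤ |θ i - θ i'|) →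
        ∀ Λ : Fin d → ℝ,
          cmin * ‖Λ‖ ≤
            ‖(Matrix.of fun (k c : Fin d) =>
                if ((e.symm c).2 : ℕ) ≤ (k : ℕ)
                then θ (e.symm c).1 ^ ((k : ℕ) - ((e.symm c).2 : ℕ)) /
                  (Nat.factorial ((k : ℕ) - ((e.symm c).2 : ℕ)) : ℝ)
                else 0).mulVec Λ‖ ∧
          ‖(Matrix.of fun (k c : Fin d) =>
                if ((e.symm c).2 : ℕ) ≤ (k : ℕ)
                then θ (e.symm c).1 ^ ((k : ℕ) - ((e.symm c).2 : ℕ)) /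
                  (Nat.factorial ((k : ℕ) - ((e.symm c).2 : ℕ)) : ℝ)
                else 0).mulVec Λ‖ ≤ cmax * ‖Λ‖ := by
  classical
  have hd : 0 < d := by
    rw [← hsum]
    exact Finset.sum_pos (fun i _ => hdv i) ⟨⟨0, hj⟩, Finset.mem_univ _⟩
  set M : (Fin j → ℝ) → Matrix (Fin d) (Fin d) ℝ := fun θ => Matrix.of fun (k c : Fin d) =>
      if ((e.symm c).2 : ℕ) ≤ (k : ℕ)
      then θ (e.symm c).1 ^ ((k : ℕ) - ((e.symm c).2 : ℕ)) /
        (Nat.factorial ((k : ℕ) - ((e.symm c).2 : ℕ)) : ℝ)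
      else 0 with hMdef
  set K : Set (Fin j → ℝ) :=
    {θ | (∀ i, θ i ∈ Θ) ∧ ∀ i i', i ≠ i' → ε ≤ |θ i - θ i'|} with hKdef
  by_cases hKne : K.Nonempty
  swap
  · exact ⟨1, 1, one_pos, one_pos, fun θ h1 h2 Λ => (hKne ⟨θ, ⟨h1, h2⟩⟩).elim⟩
  -- K is compact
  have hKc : IsCompact K := by
    have hKeq : K = (Set.pi Set.univ fun _ : Fin j => Θ) ∩
        ⋂ (i) (i') (_ : i ≠ i'), {θ : Fin j → ℝ | ε ≤ |θ i - θ i'|} := by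
      ext θ
      simp only [hKdef, Set.mem_setOf_eq, Set.mem_inter_iff, Set.mem_pi, Set.mem_univ,
        forall_true_left, Set.mem_iInter]
    rw [hKeq]
    refine (isCompact_univ_pi fun _ => hΘ).inter_right ?_
    refine isClosed_iInter fun i => isClosed_iInter fun i' => isClosed_iInter fun _ => ?_
    exact isClosed_le continuous_const (((continuous_apply i).sub (continuous_apply i')).abs)
  -- sphere
  haveI : Nonempty (Fin d) := ⟨⟨0, hd⟩⟩
  have hSne : (Metric.sphere (0 : Fin d → ℝ) 1).Nonempty :=
    NormedSpace.sphere_nonempty.mpr zero_le_one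
  have hSc : IsCompact (Metric.sphere (0 : Fin d → ℝ) 1) := isCompact_sphere _ _
  set P : Set ((Fin j → ℝ) × (Fin d → ℝ)) := K ×ˢ Metric.sphere (0 : Fin d → ℝ) 1 with hPdef
  have hPc : IsCompact P := hKc.prod hSc
  have hPne : P.Nonempty := hKne.prod hSne
  set F : (Fin j → ℝ) × (Fin d → ℝ) → ℝ := fun p => ‖(M p.1).mulVec p.2‖ with hFdef
  have hFc : Continuous F := by
    apply Continuous.norm
    apply continuous_pi
    intro k
    have : (fun p : (Fin j → ℝ) × (Fin d → ℝ) => (M p.1).mulVec p.2 k)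
        = fun p => ∑ col : Fin d, (M p.1) k col * p.2 col := rfl
    rw [this]
    apply continuous_finset_sum
    intro col _
    have : (fun p : (Fin j → ℝ) × (Fin d → ℝ) => (M p.1) k col * p.2 col)
        = fun p => (if ((e.symm col).2 : ℕ) ≤ (k : ℕ)
            then p.1 (e.symm col).1 ^ ((k : ℕ) - ((e.symm col).2 : ℕ)) /
              (Nat.factorial ((k : ℕ) - ((e.symm col).2 : ℕ)) : ℝ)
            else 0) * p.2 col := rfl
    rw [this]
    apply Continuous.mul _ ((continuous_apply col).comp continuous_snd)
    split_ifs
    · exact (((continuous_apply _).comp continuous_fst).pow _).div_const _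
    · exact continuous_const
  obtain ⟨pmin, hpminP, hmin⟩ := hPc.exists_isMinOn hPne hFc.continuousOn
  obtain ⟨pmax, hpmaxP, hmax⟩ := hPc.exists_isMaxOn hPne hFc.continuousOn
  have hinj : ∀ θ ∈ K, Function.Injective θ := by
    intro θ hθ a b hab
    by_contra hne
    have := hθ.2 a b hne
    rw [hab, sub_self, abs_zero] at this
    linarith
  have hcminpos : 0 < F pmin := by
    rcases Set.mem_prod.1 hpminP with ⟨hθK, hvS⟩
    have hv1 : ‖pmin.2‖ = 1 := mem_sphere_zero_iff_norm.1 hvS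
    have hvne : pmin.2 ≠ 0 := by
      intro h0; rw [h0, norm_zero] at hv1; linarith
    rw [hFdef]
    simp only [norm_pos_iff]
    intro hmv
    have hdet0 : (M pmin.1).det = 0 :=
      Matrix.exists_mulVec_eq_zero_iff.1 ⟨pmin.2, hvne, hmv⟩
    exact stmt4_det_ne_zero hsum e pmin.1 (hinj _ hθK) hdet0
  refine ⟨F pmin, F pmax, hcminpos, lt_of_lt_of_le hcminpos (hmin hpmaxP), ?_⟩
  intro θ h1 h2 Λ
  have hθK : θ ∈ K := ⟨h1, h2⟩
  by_cases hΛ : Λ = 0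
  · subst hΛ
    simp [Matrix.mulVec_zero]
  · have hΛn : ‖Λ‖ ≠ 0 := norm_ne_zero_iff.2 hΛ
    have hΛpos : 0 < ‖Λ‖ := norm_pos_iff.2 hΛ
    set u : Fin d → ℝ := ‖Λ‖⁻¹ • Λ with hu
    have hun : ‖u‖ = 1 := by
      rw [hu, norm_smul, norm_inv, norm_norm, inv_mul_cancel₀ hΛn]
    have huS : u ∈ Metric.sphere (0 : Fin d → ℝ) 1 := mem_sphere_zero_iff_norm.2 hun
    have hP : (θ, u) ∈ P := Set.mem_prod.2 ⟨hθK, huS⟩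
    have hΛu : Λ = ‖Λ‖ • u := by
      rw [hu, smul_smul, mul_inv_cancel₀ hΛn, one_smul]
    have hnorm : ‖(M θ).mulVec Λ‖ = ‖Λ‖ * F (θ, u) := by
      conv_lhs => rw [hΛu]
      rw [Matrix.mulVec_smul, norm_smul, norm_norm]
    constructor
    · show F pmin * ‖Λ‖ ≤ ‖(M θ).mulVec Λ‖
      rw [hnorm, mul_comm]
      exact mul_le_mul_of_nonneg_left (hmin hP) (norm_nonneg Λ)
    · show ‖(M θ).mulVec Λ‖ ≤ F pmax * ‖Λ‖
      rw [hnorm, mul_comm]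
      exact mul_le_mul_of_nonneg_right (hmax hP) (norm_nonneg Λ)
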